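/- arXiv:math/0101068 — 3 statements merged into one kernel-verified Lean document; each statement's English description precedes it below -/
import Mathlib

section
/- Let L be a complex Hilbert space and G a group of unitary operators on L (a subgroup of the unitary group of L, not necessarily abelian). Let (M, D) be a linear operator with dense domain D ⊆ L which is symmetric (⟨φ, M ψ⟩ = ⟨M φ, ψ⟩ for all φ, ψ ∈ D) and commutes with G (for every U ∈ G and φ ∈ D, Uφ ∈ D and M(Uφ) = U(Mφ)). If the von Neumann algebra of all bounded operators on L commuting with every element of G is commutative, then (M, D) is essentially self-adjoint: it is closable and its closure is self-adjoint. -/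
open MeasureTheory

section AuxiliaryLemmas

open LinearPMap

set_option maxHeartbeats 1000000

noncomputable section

variable {L : Type*} [NormedAddCommGroup L] [InnerProductSpace ℂ L] [CompleteSpace L]

local notation "⟪" x ", " y "⟫" => @inner ℂ _ _ x y

theorem my_adjoint_graph_eq (M : L →ₗ.[ℂ] L) (hdense : Dense (M.domain : Set L)) :
    (M.adjoint.graph : Set (L × L)) =
      ⋂ (x : M.domain), {p : L × L | ⟪p.2, (x : L)⟫ = ⟪p.1, M x⟫} := by
  ext p
  simp only [Set.mem_iInter, Set.mem_setOf_eq, SetLike.mem_coe, mem_graph_iff]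
  constructor
  · rintro ⟨y, hy1, hy2⟩ x
    rw [← hy1, ← hy2]
    exact (M.adjoint_isFormalAdjoint hdense) y x
  · intro h
    have hd : p.1 ∈ M.adjoint.domain :=
      mem_adjoint_domain_of_exists _ ⟨p.2, fun x => h x⟩
    exact ⟨⟨p.1, hd⟩, rfl, adjoint_apply_eq hdense _ fun x => h x⟩

theorem my_adjoint_isClosed (M : L →ₗ.[ℂ] L) (hdense : Dense (M.domain : Set L)) :
    M.adjoint.IsClosed := by
  unfold LinearPMap.IsClosed
  rw [my_adjoint_graph_eq M hdense]
  refine isClosed_iInter fun x => isClosed_eq ?_ ?_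
  · exact (continuous_snd.inner continuous_const)
  · exact (continuous_fst.inner continuous_const)

theorem my_isClosable (M : L →ₗ.[ℂ] L) (hdense : Dense (M.domain : Set L))
    (hsymm : ∀ φ ψ : M.domain, ⟪(φ : L), M ψ⟫ = ⟪M φ, (ψ : L)⟫)
    (hM : M.adjoint.IsClosed) : M.IsClosable := by
  have fa : M.IsFormalAdjoint M := fun x y => (hsymm x y).symm
  exact hM.isClosable.leIsClosable (fa.le_adjoint hdense)

theorem my_closure_symm (M : L →ₗ.[ℂ] L) (hcl : M.IsClosable)
    (hsymm : ∀ φ ψ : M.domain, ⟪(φ : L), M ψ⟫ = ⟪M φ, (ψ : L)⟫) :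
    ∀ φ ψ : M.closure.domain, ⟪(φ : L), M.closure ψ⟫ = ⟪M.closure φ, (ψ : L)⟫ := by
  have hgraph : (M.closure.graph : Set (L × L)) = closure (M.graph : Set (L × L)) := by
    rw [← hcl.graph_closure_eq_closure_graph]
    exact (Submodule.topologicalClosure_coe _).symm
  have h0 : ∀ p ∈ (M.graph : Set (L × L)), ∀ q ∈ (M.graph : Set (L × L)),
      ⟪p.1, q.2⟫ = ⟪p.2, q.1⟫ := by
    rintro p hp q hq
    rw [SetLike.mem_coe, mem_graph_iff] at hp hq
    obtain ⟨a, ha1, ha2⟩ := hp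
    obtain ⟨b, hb1, hb2⟩ := hq
    rw [← ha1, ← ha2, ← hb1, ← hb2]
    exact hsymm a b
  have h1 : ∀ p ∈ closure (M.graph : Set (L × L)), ∀ q ∈ (M.graph : Set (L × L)),
      ⟪p.1, q.2⟫ = ⟪p.2, q.1⟫ := by
    intro p hp q hq
    have : closure (M.graph : Set (L × L)) ⊆ {p : L × L | ⟪p.1, q.2⟫ = ⟪p.2, q.1⟫} := by
      refine closure_minimal (fun r hr => h0 r hr q hq) ?_
      exact isClosed_eq (continuous_fst.inner continuous_const)
        (continuous_snd.inner continuous_const)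
    exact this hp
  have h2 : ∀ p ∈ closure (M.graph : Set (L × L)), ∀ q ∈ closure (M.graph : Set (L × L)),
      ⟪p.1, q.2⟫ = ⟪p.2, q.1⟫ := by
    intro p hp q hq
    have : closure (M.graph : Set (L × L)) ⊆ {q : L × L | ⟪p.1, q.2⟫ = ⟪p.2, q.1⟫} := by
      refine closure_minimal (fun r hr => h1 p hp r hr) ?_
      exact isClosed_eq (continuous_const.inner continuous_snd)
        (continuous_const.inner continuous_fst)
    exact this hq
  intro φ ψ
  have hφ : ((φ : L), M.closure φ) ∈ closure (M.graph : Set (L × L)) := by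
    rw [← hgraph]; exact M.closure.mem_graph φ
  have hψ : ((ψ : L), M.closure ψ) ∈ closure (M.graph : Set (L × L)) := by
    rw [← hgraph]; exact M.closure.mem_graph ψ
  exact h2 _ hφ _ hψ

theorem my_closure_comm (M : L →ₗ.[ℂ] L) (hcl : M.IsClosable) (U : L ≃ₗᵢ[ℂ] L)
    (hU : ∀ φ : M.domain, ∃ h : U (φ : L) ∈ M.domain, M ⟨U (φ : L), h⟩ = U (M φ)) :
    ∀ φ : M.closure.domain, ∃ h : U (φ : L) ∈ M.closure.domain,
      M.closure ⟨U (φ : L), h⟩ = U (M.closure φ) := by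
  have hgraph : (M.closure.graph : Set (L × L)) = closure (M.graph : Set (L × L)) := by
    rw [← hcl.graph_closure_eq_closure_graph]
    exact (Submodule.topologicalClosure_coe _).symm
  set g : L × L → L × L := fun p => (U p.1, U p.2) with hg
  have hgc : Continuous g := (U.continuous.comp continuous_fst).prodMk
    (U.continuous.comp continuous_snd)
  have himg : g '' (M.graph : Set (L × L)) ⊆ (M.graph : Set (L × L)) := by
    rintro q ⟨p, hp, rfl⟩
    rw [SetLike.mem_coe, mem_graph_iff] at hp
    obtain ⟨a, ha1, ha2⟩ := hp
    obtain ⟨h, hval⟩ := hU a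
    rw [SetLike.mem_coe, mem_graph_iff]
    refine ⟨⟨U (a : L), h⟩, ?_, ?_⟩
    · simp [hg, ← ha1]
    · simp [hg, hval, ← ha2]
  intro φ
  have hφ : ((φ : L), M.closure φ) ∈ closure (M.graph : Set (L × L)) := by
    rw [← hgraph]; exact M.closure.mem_graph φ
  have : g ((φ : L), M.closure φ) ∈ closure (M.graph : Set (L × L)) :=
    ((image_closure_subset_closure_image hgc).trans (closure_mono himg))
      (Set.mem_image_of_mem g hφ)
  rw [← hgraph, SetLike.mem_coe, mem_graph_iff] at this
  obtain ⟨a, ha1, ha2⟩ := this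
  simp only [hg] at ha1 ha2
  refine ⟨ha1 ▸ a.2, ?_⟩
  have : (⟨U (φ : L), ha1 ▸ a.2⟩ : M.closure.domain) = a := Subtype.ext ha1.symm
  rw [this, ha2]

theorem my_core (G : Subgroup (L ≃ₗᵢ[ℂ] L)) (A : L →ₗ.[ℂ] L)
    (hdense : Dense (A.domain : Set L))
    (hclosed : A.IsClosed)
    (hsymm : ∀ φ ψ : A.domain, ⟪(φ : L), A ψ⟫ = ⟪A φ, (ψ : L)⟫)
    (hcomm : ∀ U ∈ G, ∀ φ : A.domain,
      ∃ h : U (φ : L) ∈ A.domain, A ⟨U (φ : L), h⟩ = U (A φ))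
    (habelian : ∀ T S : L →L[ℂ] L,
      (∀ U ∈ G, ∀ x : L, T (U x) = U (T x)) →
      (∀ U ∈ G, ∀ x : L, S (U x) = U (S x)) →
      ∀ x : L, T (S x) = S (T x)) :
    A.adjoint = A := by
  classical
  -- the maps x ↦ A x ± i x
  set fp : A.domain →ₗ[ℂ] L := A.toFun + (Complex.I : ℂ) • A.domain.subtype with hfp_def
  set fm : A.domain →ₗ[ℂ] L := A.toFun - (Complex.I : ℂ) • A.domain.subtype with hfm_def
  have hfp : ∀ x : A.domain, fp x = A x + Complex.I • (x : L) := fun x => rfl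
  have hfm : ∀ x : A.domain, fm x = A x - Complex.I • (x : L) := fun x => rfl
  -- inner product identities
  have hip : ∀ x y : A.domain, ⟪fp x, fp y⟫ = ⟪A x, A y⟫ + ⟪(x : L), (y : L)⟫ := by
    intro x y
    rw [hfp x, hfp y]
    simp only [inner_add_left, inner_add_right, inner_smul_left, inner_smul_right,
      Complex.conj_I]
    rw [hsymm x y]
    ring_nf
    rw [Complex.I_sq]
    ring
  have him : ∀ x y : A.domain, ⟪fm x, fm y⟫ = ⟪A x, A y⟫ + ⟪(x : L), (y : L)⟫ := by
    intro x y
    rw [hfm x, hfm y]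
    simp only [inner_sub_left, inner_sub_right, inner_smul_left, inner_smul_right,
      Complex.conj_I]
    rw [hsymm x y]
    ring_nf
    rw [Complex.I_sq]
    ring
  -- norm identities
  have hnp : ∀ x : A.domain, ‖fp x‖ ^ 2 = ‖A x‖ ^ 2 + ‖(x : L)‖ ^ 2 := by
    intro x
    have h := hip x x
    rw [inner_self_eq_norm_sq_to_K, inner_self_eq_norm_sq_to_K, inner_self_eq_norm_sq_to_K] at h
    exact_mod_cast h
  have hnm : ∀ x : A.domain, ‖fm x‖ ^ 2 = ‖A x‖ ^ 2 + ‖(x : L)‖ ^ 2 := by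
    intro x
    have h := him x x
    rw [inner_self_eq_norm_sq_to_K, inner_self_eq_norm_sq_to_K, inner_self_eq_norm_sq_to_K] at h
    exact_mod_cast h
  -- pointwise norm bounds
  have sqle : ∀ a b : ℝ, 0 ≤ a → 0 ≤ b → a ^ 2 ≤ b ^ 2 → a ≤ b := fun a b ha hb h =>
    (pow_le_pow_iff_left₀ ha hb two_ne_zero).mp h
  have hle_p : ∀ x : A.domain, ‖(x : L)‖ ≤ ‖fp x‖ ∧ ‖A x‖ ≤ ‖fp x‖ := by
    intro x
    constructor <;> refine sqle _ _ (norm_nonneg _) (norm_nonneg _) ?_ <;> rw [hnp x] <;> nlinarith [sq_nonneg ‖A x‖, sq_nonneg ‖(x : L)‖]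
  have hle_m : ∀ x : A.domain, ‖(x : L)‖ ≤ ‖fm x‖ ∧ ‖A x‖ ≤ ‖fm x‖ := by
    intro x
    constructor <;> refine sqle _ _ (norm_nonneg _) (norm_nonneg _) ?_ <;> rw [hnm x] <;> nlinarith [sq_nonneg ‖A x‖, sq_nonneg ‖(x : L)‖]
  -- ranges
  set Rp : Submodule ℂ L := LinearMap.range fp with hRp_def
  set Rm : Submodule ℂ L := LinearMap.range fm with hRm_def
  haveI : CompleteSpace A.graph := hclosed.completeSpace_coe
  -- closedness of the ranges
  have key_closed : ∀ (f : A.domain →ₗ[ℂ] L) (c : ℂ), ‖c‖ ≤ 1 →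
      (∀ x : A.domain, f x = A x + c • (x : L)) →
      (∀ x : A.domain, ‖(x : L)‖ ≤ ‖f x‖ ∧ ‖A x‖ ≤ ‖f x‖) →
      IsClosed ((LinearMap.range f : Submodule ℂ L) : Set L) := by
    intro f c hc hfx hbd
    set g : A.graph →ₗ[ℂ] L :=
      (LinearMap.snd ℂ L L + c • LinearMap.fst ℂ L L).comp A.graph.subtype with hg_def
    have hg : ∀ r : A.graph, g r = (r : L × L).2 + c • (r : L × L).1 := fun r => rfl
    have hgf : ∀ r : A.graph, ∃ x : A.domain, g r = f x ∧ (r : L × L) = ((x : L), A x) := by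
      intro r
      obtain ⟨x, hx1, hx2⟩ := (mem_graph_iff _).mp r.2
      refine ⟨x, ?_, ?_⟩
      · rw [hg, hfx, ← hx1, ← hx2]
      · rw [Prod.ext_iff]; exact ⟨hx1.symm, hx2.symm⟩
    have hub : ∀ r : A.graph, ‖g r‖ ≤ 2 * ‖r‖ := by
      intro r
      rw [hg]
      have h1 : ‖(r : L × L).1‖ ≤ ‖r‖ := norm_fst_le (r : L × L)
      have h2 : ‖(r : L × L).2‖ ≤ ‖r‖ := norm_snd_le (r : L × L)
      calc ‖(r : L × L).2 + c • (r : L × L).1‖ ≤ ‖(r : L × L).2‖ + ‖c‖ * ‖(r : L × L).1‖ := by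
            refine (norm_add_le _ _).trans ?_; rw [norm_smul]
        _ ≤ ‖r‖ + 1 * ‖r‖ := by
            refine add_le_add h2 ?_
            exact mul_le_mul hc h1 (norm_nonneg _) zero_le_one
        _ = 2 * ‖r‖ := by ring
    set gc := g.mkContinuous 2 hub with hgc_def
    have hgc : ∀ r, gc r = g r := fun r => rfl
    have hlb : ∀ r : A.graph, ‖r‖ ≤ 1 * ‖gc r‖ := by
      intro r
      obtain ⟨x, hgx, hrx⟩ := hgf r
      rw [one_mul, hgc, hgx]
      have hr : ‖r‖ = max ‖(x : L)‖ ‖A x‖ := by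
        have : ‖r‖ = ‖(r : L × L)‖ := rfl
        rw [this, hrx, Prod.norm_def]
      rw [hr]
      exact max_le (hbd x).1 (hbd x).2
    have hanti := AddMonoidHomClass.antilipschitz_of_bound (K := 1) gc hlb
    have hcr : IsClosed (Set.range gc) := hanti.isClosed_range gc.uniformContinuous
    have hset : ((LinearMap.range f : Submodule ℂ L) : Set L) = Set.range gc := by
      ext u
      constructor
      · rintro ⟨x, rfl⟩
        refine ⟨⟨((x : L), A x), A.mem_graph x⟩, ?_⟩
        rw [hgc, hg, hfx]
      · rintro ⟨r, rfl⟩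
        obtain ⟨x, hgx, _⟩ := hgf r
        rw [hgc, hgx]
        exact ⟨x, rfl⟩
    rw [hset]
    exact hcr
  have hRp_closed : IsClosed (Rp : Set L) :=
    key_closed fp Complex.I (by simp) hfp hle_p
  have hRm_closed : IsClosed (Rm : Set L) := by
    refine key_closed fm (-Complex.I) (by simp) (fun x => ?_) hle_m
    rw [hfm x]; module
  haveI : CompleteSpace Rp := hRp_closed.completeSpace_coe
  haveI : CompleteSpace Rm := hRm_closed.completeSpace_coe
  -- injectivity of fp and fm
  have hinj : ∀ (f : A.domain →ₗ[ℂ] L), (∀ x : A.domain, ‖(x : L)‖ ≤ ‖f x‖) →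
      Function.Injective f := by
    intro f hb a b hab
    have h0 : f (a - b) = 0 := by rw [_root_.map_sub, hab, sub_self]
    have := hb (a - b)
    rw [h0, norm_zero] at this
    have : ((a - b : A.domain) : L) = 0 := norm_le_zero_iff.mp this
    have : (a - b : A.domain) = 0 := by exact_mod_cast this
    exact sub_eq_zero.mp this
  have hinjp : Function.Injective fp := hinj fp fun x => (hle_p x).1
  have hinjm : Function.Injective fm := hinj fm fun x => (hle_m x).1
  -- the Cayley maps
  set ep : A.domain ≃ₗ[ℂ] Rp := LinearEquiv.ofInjective fp hinjp with hep_def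
  set em : A.domain ≃ₗ[ℂ] Rm := LinearEquiv.ofInjective fm hinjm with hem_def
  have hep : ∀ x : A.domain, ((ep x : Rp) : L) = fp x := fun x => rfl
  have hem : ∀ x : A.domain, ((em x : Rm) : L) = fm x := fun x => rfl
  set Z : Rp →ₗ[ℂ] L := fm ∘ₗ (ep.symm : Rp →ₗ[ℂ] A.domain) with hZ_def
  set W : Rm →ₗ[ℂ] L := fp ∘ₗ (em.symm : Rm →ₗ[ℂ] A.domain) with hW_def
  have hZ : ∀ x : A.domain, Z (ep x) = fm x := by
    intro x
    show fm (ep.symm (ep x)) = fm x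
    rw [LinearEquiv.symm_apply_apply]
  have hW : ∀ x : A.domain, W (em x) = fp x := by
    intro x
    show fp (em.symm (em x)) = fp x
    rw [LinearEquiv.symm_apply_apply]
  have hZnorm : ∀ u : Rp, ‖Z u‖ ≤ 1 * ‖u‖ := by
    intro u
    obtain ⟨x, rfl⟩ : ∃ x : A.domain, ep x = u := ⟨ep.symm u, ep.apply_symm_apply u⟩
    rw [hZ, one_mul]
    have h1 : ‖(ep x : L)‖ = ‖fp x‖ := by rw [hep]
    have h2 : ‖(ep x : Rp)‖ = ‖((ep x : Rp) : L)‖ := rfl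
    rw [h2, h1]
    refine le_of_eq ((sqle _ _ (norm_nonneg _) (norm_nonneg _) ?_).antisymm
      (sqle _ _ (norm_nonneg _) (norm_nonneg _) ?_)) <;> rw [hnp, hnm]
  have hWnorm : ∀ u : Rm, ‖W u‖ ≤ 1 * ‖u‖ := by
    intro u
    obtain ⟨x, rfl⟩ : ∃ x : A.domain, em x = u := ⟨em.symm u, em.apply_symm_apply u⟩
    rw [hW, one_mul]
    have h1 : ‖(em x : L)‖ = ‖fm x‖ := by rw [hem]
    have h2 : ‖(em x : Rm)‖ = ‖((em x : Rm) : L)‖ := rfl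
    rw [h2, h1]
    refine le_of_eq ((sqle _ _ (norm_nonneg _) (norm_nonneg _) ?_).antisymm
      (sqle _ _ (norm_nonneg _) (norm_nonneg _) ?_)) <;> rw [hnp, hnm]
  set Zc : Rp →L[ℂ] L := Z.mkContinuous 1 hZnorm with hZc_def
  set Wc : Rm →L[ℂ] L := W.mkContinuous 1 hWnorm with hWc_def
  have hZc : ∀ u : Rp, Zc u = Z u := fun u => rfl
  have hWc : ∀ u : Rm, Wc u = W u := fun u => rfl
  set C : L →L[ℂ] L := Zc.comp (Submodule.orthogonalProjectionOnto Rp) with hC_def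
  set D : L →L[ℂ] L := Wc.comp (Submodule.orthogonalProjectionOnto Rm) with hD_def
  have hCapply : ∀ y : L, C y = Z (Submodule.orthogonalProjectionOnto Rp y) := fun y => rfl
  have hDapply : ∀ y : L, D y = W (Submodule.orthogonalProjectionOnto Rm y) := fun y => rfl
  -- action of C and D on the ranges and their complements
  have hCfp : ∀ x : A.domain, C (fp x) = fm x := by
    intro x
    rw [hCapply]
    have h1 : Submodule.orthogonalProjectionOnto Rp (fp x) = ep x := by
      apply Subtype.ext
      rw [hep]
      exact Submodule.eq_starProjection_of_mem_orthogonal (ep x).2 (by simp [hep])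
    rw [h1, hZ]
  have hDfm : ∀ x : A.domain, D (fm x) = fp x := by
    intro x
    rw [hDapply]
    have h1 : Submodule.orthogonalProjectionOnto Rm (fm x) = em x := by
      apply Subtype.ext
      rw [hem]
      exact Submodule.eq_starProjection_of_mem_orthogonal (em x).2 (by simp [hem])
    rw [h1, hW]
  have hCD : ∀ z : L, C (D z) = (Submodule.orthogonalProjectionOnto Rm z : L) := by
    intro z
    obtain ⟨x, hx⟩ : ∃ x : A.domain, fm x = ((Submodule.orthogonalProjectionOnto Rm z : Rm) : L) :=
      (Submodule.orthogonalProjectionOnto Rm z).2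
    have hD1 : D z = fp x := by
      rw [hDapply]
      have : (Submodule.orthogonalProjectionOnto Rm z : Rm) = em x := Subtype.ext (by rw [hem, hx])
      rw [this, hW]
    rw [hD1, hCfp, hx]
  have hDC : ∀ y : L, D (C y) = (Submodule.orthogonalProjectionOnto Rp y : L) := by
    intro y
    obtain ⟨x, hx⟩ : ∃ x : A.domain, fp x = ((Submodule.orthogonalProjectionOnto Rp y : Rp) : L) :=
      (Submodule.orthogonalProjectionOnto Rp y).2
    have hC1 : C y = fm x := by
      rw [hCapply]
      have : (Submodule.orthogonalProjectionOnto Rp y : Rp) = ep x := Subtype.ext (by rw [hep, hx])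
      rw [this, hZ]
    rw [hC1, hDfm, hx]
  -- commutation with the group
  have hfpU : ∀ U ∈ G, ∀ x : A.domain, ∃ x' : A.domain,
      ((x' : L) = U (x : L) ∧ fp x' = U (fp x)) ∧ fm x' = U (fm x) := by
    intro U hU x
    obtain ⟨h, hval⟩ := hcomm U hU x
    refine ⟨⟨U (x : L), h⟩, ⟨rfl, ?_⟩, ?_⟩
    · rw [hfp, hfp, hval]
      rw [_root_.map_add, LinearIsometryEquiv.map_smul]
    · rw [hfm, hfm, hval]
      rw [_root_.map_sub, LinearIsometryEquiv.map_smul]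
  have hURp : ∀ U ∈ G, ∀ u ∈ Rp, U u ∈ Rp := by
    rintro U hU u ⟨x, rfl⟩
    obtain ⟨x', ⟨-, hx2⟩, -⟩ := hfpU U hU x
    exact ⟨x', hx2⟩
  have hURm : ∀ U ∈ G, ∀ u ∈ Rm, U u ∈ Rm := by
    rintro U hU u ⟨x, rfl⟩
    obtain ⟨x', -, hx3⟩ := hfpU U hU x
    exact ⟨x', hx3⟩
  have hUinv_apply : ∀ (U : L ≃ₗᵢ[ℂ] L) (v : L), U (U⁻¹ v) = v := by
    intro U v
    rw [LinearIsometryEquiv.coe_inv]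
    exact U.apply_symm_apply v
  have hUperp : ∀ (K : Submodule ℂ L), (∀ U ∈ G, ∀ u ∈ K, U u ∈ K) →
      ∀ U ∈ G, ∀ y ∈ Kᗮ, U y ∈ Kᗮ := by
    intro K hK U hU y hy
    rw [Submodule.mem_orthogonal] at hy ⊢
    intro u hu
    have h1 : U⁻¹ u ∈ K := hK U⁻¹ (inv_mem hU) u hu
    have h2 : ⟪U (U⁻¹ u), U y⟫ = ⟪(U⁻¹ u : L), y⟫ := U.inner_map_map _ _
    rw [hUinv_apply] at h2
    rw [h2]
    exact hy _ h1
  have hUPp : ∀ U ∈ G, ∀ y : L,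
      ((Submodule.orthogonalProjectionOnto Rp (U y) : Rp) : L) = U ((Submodule.orthogonalProjectionOnto Rp y : Rp) : L) := by
    intro U hU y
    refine Submodule.eq_starProjection_of_mem_orthogonal
      (hURp U hU _ (Submodule.orthogonalProjectionOnto Rp y).2) ?_
    rw [← _root_.map_sub]
    exact hUperp Rp hURp U hU _ (Submodule.sub_starProjection_mem_orthogonal y)
  have hUPm : ∀ U ∈ G, ∀ y : L,
      ((Submodule.orthogonalProjectionOnto Rm (U y) : Rm) : L) = U ((Submodule.orthogonalProjectionOnto Rm y : Rm) : L) := by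
    intro U hU y
    refine Submodule.eq_starProjection_of_mem_orthogonal
      (hURm U hU _ (Submodule.orthogonalProjectionOnto Rm y).2) ?_
    rw [← _root_.map_sub]
    exact hUperp Rm hURm U hU _ (Submodule.sub_starProjection_mem_orthogonal y)
  have hCU : ∀ U ∈ G, ∀ y : L, C (U y) = U (C y) := by
    intro U hU y
    rw [hCapply, hCapply]
    set u : Rp := Submodule.orthogonalProjectionOnto Rp y with hu_def
    obtain ⟨x, hx⟩ : ∃ x : A.domain, ep x = u := ⟨ep.symm u, ep.apply_symm_apply u⟩
    obtain ⟨x', ⟨-, hx2⟩, hx3⟩ := hfpU U hU x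
    have h1 : Submodule.orthogonalProjectionOnto Rp (U y) = ep x' := by
      apply Subtype.ext
      rw [hUPp U hU y, hep, hx2, ← hu_def, ← hx, hep]
    rw [h1, hZ, hx3, ← hx, hZ]
  have hDU : ∀ U ∈ G, ∀ y : L, D (U y) = U (D y) := by
    intro U hU y
    rw [hDapply, hDapply]
    set u : Rm := Submodule.orthogonalProjectionOnto Rm y with hu_def
    obtain ⟨x, hx⟩ : ∃ x : A.domain, em x = u := ⟨em.symm u, em.apply_symm_apply u⟩
    obtain ⟨x', ⟨-, hx2⟩, hx3⟩ := hfpU U hU x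
    have h1 : Submodule.orthogonalProjectionOnto Rm (U y) = em x' := by
      apply Subtype.ext
      rw [hUPm U hU y, hem, hx3, ← hu_def, ← hx, hem]
    rw [h1, hW, hx2, ← hx, hW]
  -- the abelian hypothesis : the two projections agree
  have hPP : ∀ z : L, ((Submodule.orthogonalProjectionOnto Rm z : Rm) : L)
      = ((Submodule.orthogonalProjectionOnto Rp z : Rp) : L) := by
    intro z
    rw [← hCD z, ← hDC z]
    exact habelian C D hCU hDU z
  have hRpm : Rp = Rm := by
    ext u
    rw [← Submodule.starProjection_eq_self_iff (K := Rp), ← Submodule.starProjection_eq_self_iff (K := Rm)]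
    exact iff_of_eq (congrArg (· = u) (hPP u).symm)
  -- the ranges are all of L
  have hperp : Rpᗮ = ⊥ := by
    rw [Submodule.eq_bot_iff]
    intro y hy
    have hy' : y ∈ Rmᗮ := by rw [← hRpm]; exact hy
    rw [Submodule.mem_orthogonal] at hy hy'
    have hinner0 : ∀ x : A.domain, ⟪(x : L), y⟫ = 0 := by
      intro x
      have h1 := hy (fp x) ⟨x, rfl⟩
      have h2 := hy' (fm x) ⟨x, rfl⟩
      have h3 : ⟪fp x - fm x, y⟫ = 0 := by rw [inner_sub_left, h1, h2, sub_zero]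
      have h4 : fp x - fm x = (2 * Complex.I) • (x : L) := by rw [hfp, hfm]; module
      rw [h4, inner_smul_left] at h3
      have h6 : (starRingEnd ℂ) (2 * Complex.I) ≠ 0 := by
        simp [Complex.I_ne_zero]
      exact (mul_eq_zero.mp h3).resolve_left h6
    have hall : ∀ v : L, ⟪v, y⟫ = 0 := by
      have hsub : (A.domain : Set L) ⊆ {v : L | ⟪v, y⟫ = 0} := fun v hv => hinner0 ⟨v, hv⟩
      have hcl : IsClosed {v : L | ⟪v, y⟫ = 0} :=
        isClosed_eq (continuous_id.inner continuous_const) continuous_const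
      intro v
      have hv : v ∈ closure (A.domain : Set L) := by rw [hdense.closure_eq]; trivial
      exact closure_minimal hsub hcl hv
    exact inner_self_eq_zero.mp (hall y)
  have hRp_top : Rp = ⊤ := Submodule.orthogonal_eq_bot_iff.mp hperp
  have hRm_top : Rm = ⊤ := by rw [← hRpm]; exact hRp_top
  -- the adjoint equals A
  have fa : A.IsFormalAdjoint A := fun x y => (hsymm x y).symm
  have hle1 : A ≤ A.adjoint := fa.le_adjoint hdense
  have hkey : ∀ a : A.adjoint.domain, ∃ x : A.domain,
      (a : L) = (x : L) ∧ A.adjoint a = A x := by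
    intro a
    have hmemRm : A.adjoint a - Complex.I • (a : L) ∈ Rm := by
      rw [hRm_top]; exact Submodule.mem_top
    obtain ⟨x, hx⟩ := hmemRm
    have horth : ∀ z : A.domain, ⟪fp z, (a : L) - (x : L)⟫ = 0 := by
      intro z
      have hadj := A.adjoint_isFormalAdjoint hdense a z
      have h1 : ⟪A z, (a : L)⟫ = ⟪(z : L), A.adjoint a⟫ := by
        have hc := congrArg (starRingEnd ℂ) hadj
        rwa [inner_conj_symm, inner_conj_symm, eq_comm] at hc
      have h2 : ⟪A z, (x : L)⟫ = ⟪(z : L), A x⟫ := (hsymm z x).symm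
      have hx' : ⟪(z : L), fm x⟫
          = ⟪(z : L), A.adjoint a⟫ - Complex.I * ⟪(z : L), (a : L)⟫ := by
        rw [hx, inner_sub_right, inner_smul_right]
      rw [hfm x, inner_sub_right, inner_smul_right] at hx'
      rw [hfp z, inner_sub_right, inner_add_left, inner_add_left, inner_smul_left,
        inner_smul_left, h1, h2, Complex.conj_I]
      linear_combination -hx'
    have hmem : (a : L) - (x : L) ∈ Rpᗮ := by
      rw [Submodule.mem_orthogonal]
      rintro u ⟨z, rfl⟩
      exact horth z
    rw [hperp, Submodule.mem_bot, sub_eq_zero] at hmem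
    refine ⟨x, hmem, ?_⟩
    have h5 : A.adjoint a = fm x + Complex.I • (a : L) := by rw [hx]; abel
    rw [h5, hfm x, hmem, sub_add_cancel]
  have hle2 : A.adjoint ≤ A := by
    constructor
    · intro v hv
      obtain ⟨x, hx1, -⟩ := hkey ⟨v, hv⟩
      have hvx : v = (x : L) := hx1
      rw [hvx]
      exact x.2
    · intro a b hab
      obtain ⟨x, hx1, hx2⟩ := hkey a
      have hbx : b = x := Subtype.ext (hab.symm.trans hx1)
      rw [hx2, hbx]
  exact le_antisymm hle2 hle1

end

end AuxiliaryLemmas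

/-- Let `L` be a complex Hilbert space and `G` a group of unitary
operators on `L` (a subgroup of the group of unitary operators, here realized as the
ℂ-linear isometric automorphisms of `L`).  Let `(M, D)` be a densely defined symmetric
linear operator commuting with `G`.  If the von Neumann algebra of bounded operators
commuting with every element of `G` is commutative, then `(M, D)` is essentially
self-adjoint: it is closable and its closure is self-adjoint. -/
theorem essentially_selfadjoint_of_commutant_abelian
    {L : Type*} [NormedAddCommGroup L] [InnerProductSpace ℂ L] [CompleteSpace L]
    (G : Subgroup (L ≃ₗᵢ[ℂ] L))
    (M : L →ₗ.[ℂ] L)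
    (hdense : Dense (M.domain : Set L))
    (hsymm : ∀ φ ψ : M.domain,
      @inner ℂ _ _ (φ : L) (M ψ) = @inner ℂ _ _ (M φ) (ψ : L))
    (hcomm : ∀ U ∈ G, ∀ φ : M.domain,
      ∃ h : U (φ : L) ∈ M.domain, M ⟨U (φ : L), h⟩ = U (M φ))
    (habelian : ∀ T S : L →L[ℂ] L,
      (∀ U ∈ G, ∀ x : L, T (U x) = U (T x)) →
      (∀ U ∈ G, ∀ x : L, S (U x) = U (S x)) →
      ∀ x : L, T (S x) = S (T x)) :
    M.IsClosable ∧ IsSelfAdjoint M.closure := by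
  have hcl : M.IsClosable := my_isClosable M hdense hsymm (my_adjoint_isClosed M hdense)
  refine ⟨hcl, ?_⟩
  rw [LinearPMap.isSelfAdjoint_def]
  exact my_core G M.closure
    (hdense.mono (SetLike.coe_subset_coe.mpr M.le_closure.1))
    hcl.closure_isClosed
    (my_closure_symm M hcl hsymm)
    (fun U hU => my_closure_comm M hcl U (hcomm U hU))
    habelian
end

section
/- Let p be a prime number and let χ : ℤ_p^× → ℂ^× be a continuous group homomorphism which is nontrivial. Let f ≥ 1 be the conductor exponent of χ, i.e. the smallest integer n ≥ 1 such that χ(u) = 1 for all u ∈ 1 + pⁿℤ_p. Let μ be the Haar measure on the compact group ℤ_p^× normalized so that μ(ℤ_p^×) = log p. Then ∫_{ℤ_p^×} (1 − χ(t))/|1 − t|_p dμ(t) = f · log p. (Equivalently, with the additive Haar measure λ on ℚ_p normalized by λ(ℤ_p) = 1, one has ∫_{ℤ_p^×} (1 − χ(t))/|1 − t|_p dλ(t) = f·(1 − 1/p).) -/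
open MeasureTheory

lemma measure_univ_eq_card_mul_measure {G : Type*} [Group G] [MeasurableSpace G]
    [MeasurableMul G] (μ : Measure G) [μ.IsMulLeftInvariant]
    (H : Subgroup G) [Finite (G ⧸ H)] (hH : MeasurableSet (H : Set G)) :
    μ Set.univ = (Nat.card (G ⧸ H)) * μ (H : Set G) := by
  have hfib : ∀ q : G ⧸ H, ((QuotientGroup.mk : G → G ⧸ H) ⁻¹' {q})
      = (fun x => (Quotient.out q)⁻¹ * x) ⁻¹' (H : Set G) := by
    intro q
    ext x
    simp only [Set.mem_preimage, Set.mem_singleton_iff, SetLike.mem_coe]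
    have hout : (QuotientGroup.mk (Quotient.out q) : G ⧸ H) = q := Quotient.out_eq' q
    constructor
    · rintro rfl
      exact (QuotientGroup.eq (s := H)).mp hout
    · intro h
      rw [← hout]
      exact ((QuotientGroup.eq (s := H)).mpr h).symm
  have hmeas : ∀ q : G ⧸ H, MeasurableSet ((QuotientGroup.mk : G → G ⧸ H) ⁻¹' {q}) := by
    intro q; rw [hfib]; exact hH.preimage (measurable_const_mul _)
  have hdisj : Pairwise (Function.onFun Disjoint
      fun q : G ⧸ H => (QuotientGroup.mk : G → G ⧸ H) ⁻¹' {q}) := by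
    intro a b hab
    refine Set.disjoint_left.mpr ?_
    rintro x ha hb
    exact hab (by rw [← Set.mem_singleton_iff.mp ha, ← Set.mem_singleton_iff.mp hb])
  have hcover : (Set.univ : Set G) = ⋃ q : G ⧸ H, (QuotientGroup.mk : G → G ⧸ H) ⁻¹' {q} := by
    ext x; simp
  have hval : ∀ q : G ⧸ H, μ ((QuotientGroup.mk : G → G ⧸ H) ⁻¹' {q}) = μ (H : Set G) := by
    intro q; rw [hfib]; exact measure_preimage_mul μ _ _
  rw [hcover, measure_iUnion hdisj hmeas]
  simp_rw [hval]
  cases nonempty_fintype (G ⧸ H)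
  rw [tsum_eq_sum (s := Finset.univ) (fun b hb => absurd (Finset.mem_univ b) hb),
    Finset.sum_const, Nat.card_eq_fintype_card, Finset.card_univ, nsmul_eq_mul]

lemma integral_char_eq_zero {G : Type*} [Group G] [MeasurableSpace G] [MeasurableMul G]
    (μ : Measure G) [μ.IsMulLeftInvariant]
    (H : Subgroup G) (hH : MeasurableSet (H : Set G))
    (χ : G →* ℂˣ) (h : G) (hh : h ∈ H) (hχh : ((χ h : ℂˣ) : ℂ) ≠ 1) :
    ∫ t in (H : Set G), ((χ t : ℂˣ) : ℂ) ∂μ = 0 := by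
  have key := integral_mul_left_eq_self (μ := μ)
    (fun t => (H : Set G).indicator (fun s => ((χ s : ℂˣ) : ℂ)) t) h
  have heq : ∀ t : G, (H : Set G).indicator (fun s => ((χ s : ℂˣ) : ℂ)) (h * t)
      = ((χ h : ℂˣ) : ℂ) * (H : Set G).indicator (fun s => ((χ s : ℂˣ) : ℂ)) t := by
    intro t
    by_cases ht : t ∈ H
    · rw [Set.indicator_of_mem (a := t) ht, Set.indicator_of_mem (H.mul_mem hh ht)]
      rw [map_mul, Units.val_mul]
    · rw [Set.indicator_of_notMem (a := t) ht, Set.indicator_of_notMem, mul_zero]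
      intro hc
      exact ht (by simpa using H.mul_mem (H.inv_mem hh) hc)
  simp_rw [heq] at key
  rw [integral_const_mul] at key
  rw [← integral_indicator hH]
  have hz : (((χ h : ℂˣ) : ℂ) - 1) * ∫ t, (H : Set G).indicator
      (fun s => ((χ s : ℂˣ) : ℂ)) t ∂μ = 0 := by
    rw [sub_mul, one_mul, key, sub_self]
  rcases mul_eq_zero.mp hz with h1 | h2
  · exact absurd (sub_eq_zero.mp h1) hχh
  · exact h2

noncomputable def padicUnitsLevel (p : ℕ) [Fact p.Prime] (n : ℕ) : Subgroup ℤ_[p]ˣ :=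
  MonoidHom.ker (Units.map (PadicInt.toZModPow (p := p) n).toMonoidHom)

lemma mem_padicUnitsLevel (p : ℕ) [hp : Fact p.Prime] {n : ℕ} {u : ℤ_[p]ˣ} :
    u ∈ padicUnitsLevel p n ↔ ‖(u : ℤ_[p]) - 1‖ ≤ (p : ℝ) ^ (-(n : ℤ)) := by
  rw [padicUnitsLevel, MonoidHom.mem_ker, PadicInt.norm_le_pow_iff_mem_span_pow,
    ← PadicInt.ker_toZModPow, RingHom.mem_ker, map_sub, map_one, sub_eq_zero]
  constructor
  · intro h
    have := congrArg (Units.val) h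
    simpa using this
  · intro h
    ext
    simpa using h

lemma padicUnitsMap_surjective (p : ℕ) [hp : Fact p.Prime] {n : ℕ} (hn : 1 ≤ n) :
    Function.Surjective (Units.map (PadicInt.toZModPow (p := p) n).toMonoidHom) := by
  haveI : NeZero (p ^ n) := ⟨pow_ne_zero n hp.out.ne_zero⟩
  intro x
  set y : ZMod (p ^ n) := (x : ZMod (p ^ n)) with hy
  set a : ℤ_[p] := (y.val : ℤ_[p]) with ha
  have hcop : Nat.Coprime y.val (p ^ n) := ZMod.val_coe_unit_coprime x
  have hnd : ¬ (p : ℤ) ∣ (y.val : ℤ) := by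
    rw [Int.natCast_dvd_natCast]
    intro hd
    have h1 : p ∣ Nat.gcd y.val (p ^ n) := Nat.dvd_gcd hd (dvd_pow_self p (by omega))
    rw [hcop] at h1
    have h2 := hp.out.two_le
    have h3 := Nat.le_of_dvd Nat.one_pos h1
    omega
  have hnorm : ‖a‖ = 1 := by
    refine le_antisymm (PadicInt.norm_le_one a) ?_
    by_contra hlt
    push_neg at hlt
    have : ‖((y.val : ℤ) : ℤ_[p])‖ < 1 := by
      rwa [show ((y.val : ℤ) : ℤ_[p]) = a by push_cast [ha]; ring]
    exact hnd ((PadicInt.norm_int_lt_one_iff_dvd _).mp this)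
  obtain ⟨u, hu⟩ := PadicInt.isUnit_iff.mpr hnorm
  refine ⟨u, ?_⟩
  ext
  rw [Units.coe_map]
  show PadicInt.toZModPow n (u : ℤ_[p]) = (x : ZMod (p ^ n))
  rw [hu, ha, map_natCast, ZMod.natCast_val, ZMod.cast_id]

lemma finite_quot_padicUnitsLevel (p : ℕ) [hp : Fact p.Prime] {n : ℕ} (hn : 1 ≤ n) :
    Finite (ℤ_[p]ˣ ⧸ padicUnitsLevel p n) := by
  haveI : NeZero (p ^ n) := ⟨pow_ne_zero n hp.out.ne_zero⟩
  exact Finite.of_equiv _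
    (QuotientGroup.quotientKerEquivOfSurjective _ (padicUnitsMap_surjective p hn)).symm.toEquiv

lemma card_quot_padicUnitsLevel (p : ℕ) [hp : Fact p.Prime] {n : ℕ} (hn : 1 ≤ n) :
    Nat.card (ℤ_[p]ˣ ⧸ padicUnitsLevel p n) = p ^ (n - 1) * (p - 1) := by
  haveI : NeZero (p ^ n) := ⟨pow_ne_zero n hp.out.ne_zero⟩
  unfold padicUnitsLevel
  rw [Nat.card_congr
    (QuotientGroup.quotientKerEquivOfSurjective _ (padicUnitsMap_surjective p hn)).toEquiv,
    Nat.card_eq_fintype_card, ZMod.card_units_eq_totient,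
    Nat.totient_prime_pow hp.out (by omega)]

lemma telescope_sum (p : ℕ) (L : ℝ) (c : ℕ → ℝ) (h0 : c 0 = L)
    (hs : ∀ n : ℕ, ((p : ℝ) - 1) * (p : ℝ) ^ n * c (n + 1) = L) :
    ∀ k : ℕ, (∑ n ∈ Finset.range k, (p : ℝ) ^ n * (c n - c (n + 1))) + (p : ℝ) ^ k * c k
      = (k + 1) * L := by
  intro k
  induction k with
  | zero => simpa using h0
  | succ k ih =>
    rw [Finset.sum_range_succ]
    push_cast
    linear_combination ih + hs k

/-- Weil's conductor formula.  Let `p` be a prime and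
`χ : ℤ_p^× → ℂ^×` a continuous nontrivial group homomorphism, with conductor
exponent `f` (the smallest `n ≥ 1` such that `χ` is trivial on `1 + pⁿℤ_p`, i.e. on
the units `u` with `‖u - 1‖ ≤ p^(-n)`).  If `μ` is the Haar measure on the compact
group `ℤ_p^×` normalized by `μ(ℤ_p^×) = log p`, then
`∫_{ℤ_p^×} (1 − χ(t)) / |1 − t|_p dμ(t) = f · log p`. -/
theorem weil_conductor_formula (p : ℕ) [Fact p.Prime]
    [MeasurableSpace ℤ_[p]ˣ] [BorelSpace ℤ_[p]ˣ]
    (μ : Measure ℤ_[p]ˣ) [μ.IsHaarMeasure]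
    (hμ : μ Set.univ = ENNReal.ofReal (Real.log p))
    (χ : ℤ_[p]ˣ →* ℂˣ) (hχcont : Continuous χ) (hχnontriv : χ ≠ 1)
    (f : ℕ) (hf1 : 1 ≤ f)
    (hf : ∀ u : ℤ_[p]ˣ, ‖(u : ℤ_[p]) - 1‖ ≤ (p : ℝ) ^ (-(f : ℤ)) → χ u = 1)
    (hfmin : ∀ n : ℕ, 1 ≤ n →
      (∀ u : ℤ_[p]ˣ, ‖(u : ℤ_[p]) - 1‖ ≤ (p : ℝ) ^ (-(n : ℤ)) → χ u = 1) → f ≤ n) :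
    (∫ t : ℤ_[p]ˣ, ((1 : ℂ) - (χ t : ℂ)) / (‖(1 : ℤ_[p]) - (t : ℤ_[p])‖ : ℂ) ∂μ)
      = (f : ℂ) * (Real.log p : ℂ) := by
  have hp : p.Prime := Fact.out
  have hp1 : (1 : ℝ) ≤ (p : ℝ) := by exact_mod_cast hp.one_le
  haveI : IsFiniteMeasure μ := ⟨by rw [hμ]; exact ENNReal.ofReal_lt_top⟩
  haveI : MeasurableMul ℤ_[p]ˣ :=
    ⟨fun c => (continuous_const.mul continuous_id).measurable,
     fun c => (continuous_id.mul continuous_const).measurable⟩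
  set S : ℕ → Set ℤ_[p]ˣ := fun n => {t | ‖(t : ℤ_[p]) - 1‖ ≤ (p : ℝ) ^ (-(n : ℤ))} with hS
  have hScoe : ∀ n, S n = (padicUnitsLevel p n : Set ℤ_[p]ˣ) := by
    intro n; ext t; exact (mem_padicUnitsLevel p).symm
  have hSmeas : ∀ n, MeasurableSet (S n) := by
    intro n
    have hco : Continuous fun t : ℤ_[p]ˣ => ‖(t : ℤ_[p]) - 1‖ :=
      (Units.continuous_val.sub continuous_const).norm
    exact (isClosed_le hco continuous_const).measurableSet
  have hS0 : S 0 = Set.univ := by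
    ext t; simp [hS, PadicInt.norm_le_one]
  have hmono : ∀ {m n : ℕ}, m ≤ n → S n ⊆ S m := by
    intro m n hmn t ht
    refine le_trans ht (zpow_le_zpow_right₀ hp1 (by omega))
  set L : ℝ := Real.log p with hL
  have hLnn : 0 ≤ L := Real.log_nonneg hp1
  have hc0 : (μ (S 0)).toReal = L := by
    rw [hS0, hμ, ENNReal.toReal_ofReal hLnn]
  have hcs : ∀ n : ℕ, ((p : ℝ) - 1) * (p : ℝ) ^ n * (μ (S (n + 1))).toReal = L := by
    intro n
    haveI := finite_quot_padicUnitsLevel p (n := n + 1) (by omega)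
    have h1 := measure_univ_eq_card_mul_measure μ (padicUnitsLevel p (n + 1))
      (by rw [← hScoe]; exact hSmeas (n + 1))
    rw [hμ, card_quot_padicUnitsLevel p (by omega), ← hScoe] at h1
    have h2 := congrArg ENNReal.toReal h1
    rw [ENNReal.toReal_ofReal hLnn, ENNReal.toReal_mul, ENNReal.toReal_natCast] at h2
    have h3 : ((p ^ (n + 1 - 1) * (p - 1) : ℕ) : ℝ) = ((p : ℝ) - 1) * (p : ℝ) ^ n := by
      have : n + 1 - 1 = n := rfl
      rw [this]
      push_cast [Nat.cast_sub hp.one_le]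
      ring
    rw [h3] at h2
    linear_combination -h2
  -- the character as a complex-valued function
  set χc : ℤ_[p]ˣ → ℂ := fun t => ((χ t : ℂˣ) : ℂ) with hχcdef
  have hχcc : Continuous χc := Units.continuous_val.comp hχcont
  haveI hQf := finite_quot_padicUnitsLevel p hf1
  have hnorm1 : ∀ t : ℤ_[p]ˣ, ‖χc t‖ = 1 := by
    intro t
    set N := Nat.card (ℤ_[p]ˣ ⧸ padicUnitsLevel p f) with hN
    have hNpos : 0 < N := Nat.card_pos
    have htN : t ^ N ∈ padicUnitsLevel p f := by
      have h2 : ((t ^ N : ℤ_[p]ˣ) : ℤ_[p]ˣ ⧸ padicUnitsLevel p f) = 1 := by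
        show (QuotientGroup.mk' (padicUnitsLevel p f)) (t ^ N) = 1
        rw [map_pow]
        exact pow_card_eq_one'
      exact (QuotientGroup.eq_one_iff _).mp h2
    have hχtN : χc t ^ N = 1 := by
      have h5 := hf (t ^ N) ((mem_padicUnitsLevel p).mp htN)
      have : χc t ^ N = ((χ (t ^ N) : ℂˣ) : ℂ) := by
        rw [map_pow, Units.val_pow_eq_pow_val]
      rw [this, h5]; rfl
    have h4 : ‖χc t‖ ^ N = 1 := by rw [← norm_pow, hχtN, norm_one]
    rcases lt_trichotomy ‖χc t‖ 1 with h | h | h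
    · exact absurd h4 (ne_of_lt (pow_lt_one₀ (norm_nonneg _) h hNpos.ne'))
    · exact h
    · exact absurd h4 (ne_of_gt (one_lt_pow₀ h hNpos.ne'))
  have hintχ : Integrable χc μ := by
    refine ⟨hχcc.aestronglyMeasurable, ?_⟩
    apply HasFiniteIntegral.of_bounded (C := 1)
    exact Filter.Eventually.of_forall fun t => le_of_eq (hnorm1 t)
  -- set-integrals of the character
  have hv0 : ∀ m : ℕ, m < f → ∫ t in S m, χc t ∂μ = 0 := by
    intro m hm
    have hex : ∃ h : ℤ_[p]ˣ, h ∈ padicUnitsLevel p m ∧ ((χ h : ℂˣ) : ℂ) ≠ 1 := by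
      by_contra hcon
      push_neg at hcon
      have htriv : ∀ u : ℤ_[p]ˣ, ‖(u : ℤ_[p]) - 1‖ ≤ (p : ℝ) ^ (-(m : ℤ)) → χ u = 1 := by
        intro u hu
        exact Units.ext (hcon u ((mem_padicUnitsLevel p).mpr hu))
      rcases Nat.eq_zero_or_pos m with rfl | hm1
      · apply hχnontriv
        ext u
        have h6 : χ u = 1 := htriv u (by simpa using PadicInt.norm_le_one _)
        rw [h6]; rfl
      · exact absurd (hfmin m hm1 htriv) (by omega)
    obtain ⟨h, hhmem, hhne⟩ := hex
    rw [hScoe]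
    exact integral_char_eq_zero μ _ (by rw [← hScoe]; exact hSmeas m) χ h hhmem hhne
  have hvf : ∫ t in S f, χc t ∂μ = (((μ (S f)).toReal : ℝ) : ℂ) := by
    have h1 : Set.EqOn χc (fun _ => (1 : ℂ)) (S f) := fun t ht => by
      show ((χ t : ℂˣ) : ℂ) = 1
      rw [hf t ht]; rfl
    rw [setIntegral_congr_fun (hSmeas f) h1, setIntegral_const]
    simp
    rfl
  -- pointwise decomposition of the integrand
  have hgsum : ∀ t : ℤ_[p]ˣ, ((1 : ℂ) - χc t) / (‖(1 : ℤ_[p]) - (t : ℤ_[p])‖ : ℂ)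
      = ∑ n ∈ Finset.range f,
          (S n \ S (n + 1)).indicator (fun s => (p : ℂ) ^ n * (1 - χc s)) t := by
    intro t
    by_cases htf : t ∈ S f
    · have h1 : χc t = 1 := by
        show ((χ t : ℂˣ) : ℂ) = 1
        rw [hf t htf]; rfl
      rw [h1, sub_self, zero_div]
      symm
      apply Finset.sum_eq_zero
      intro n hn
      rw [Finset.mem_range] at hn
      apply Set.indicator_of_notMem
      intro hmem
      exact hmem.2 (hmono (by omega) htf)
    · have hex : ∃ m, t ∉ S m := ⟨f, htf⟩
      set k := Nat.find hex - 1 with hk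
      have hfind1 : 1 ≤ Nat.find hex := by
        rcases Nat.eq_zero_or_pos (Nat.find hex) with h | h
        · have := Nat.find_spec hex
          rw [h, hS0] at this
          exact absurd (Set.mem_univ t) this
        · exact h
      have hkS : t ∈ S k := not_not.mp (Nat.find_min hex (by omega))
      have hkS1 : t ∉ S (k + 1) := by
        have : k + 1 = Nat.find hex := by omega
        rw [this]
        exact Nat.find_spec hex
      have hkf : k + 1 ≤ f := by
        have := Nat.find_min' hex htf
        omega
      have hnval : ‖(t : ℤ_[p]) - 1‖ = (p : ℝ) ^ (-(k : ℤ)) := by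
        refine le_antisymm hkS ?_
        by_contra hlt
        push_neg at hlt
        apply hkS1
        have h7 := (PadicInt.norm_lt_pow_iff_norm_le_pow_sub_one _ _).mp hlt
        show ‖(t : ℤ_[p]) - 1‖ ≤ (p : ℝ) ^ (-((k : ℕ) + 1 : ℕ) : ℤ)
        convert h7 using 2
        push_cast
        ring
      have hpc : ((p : ℂ)) ≠ 0 := by
        exact_mod_cast (Nat.cast_ne_zero (R := ℂ)).mpr hp.ne_zero
      have hLHS : ((1 : ℂ) - χc t) / (‖(1 : ℤ_[p]) - (t : ℤ_[p])‖ : ℂ)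
          = (p : ℂ) ^ (k : ℕ) * (1 - χc t) := by
        rw [norm_sub_rev, hnval]
        have h8 : (((p : ℝ) ^ (-(k : ℤ)) : ℝ) : ℂ) = (p : ℂ) ^ (-(k : ℤ)) := by
          push_cast
          ring
        rw [h8, div_eq_mul_inv, ← zpow_neg, neg_neg, ← zpow_natCast (p : ℂ) k]
        ring
      rw [Finset.sum_eq_single_of_mem k (Finset.mem_range.mpr (by omega))]
      · rw [Set.indicator_of_mem (show t ∈ S k \ S (k + 1) from ⟨hkS, hkS1⟩)]
        exact hLHS
      · intro m hm hmne
        apply Set.indicator_of_notMem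
        intro hmem
        rcases lt_or_gt_of_ne hmne with h | h
        · exact hmem.2 (hmono (by omega) hkS)
        · exact hkS1 (hmono (by omega) hmem.1)
  have hAint : ∀ n : ℕ, Integrable
      ((S n \ S (n + 1)).indicator fun s => (p : ℂ) ^ n * (1 - χc s)) μ :=
    fun n => (((integrable_const (1 : ℂ)).sub hintχ).const_mul _).indicator
      ((hSmeas n).diff (hSmeas (n + 1)))
  obtain ⟨e, rfl⟩ : ∃ e, f = e + 1 := ⟨f - 1, by omega⟩
  have step : (∫ t : ℤ_[p]ˣ, ((1 : ℂ) - χc t) / (‖(1 : ℤ_[p]) - (t : ℤ_[p])‖ : ℂ) ∂μ)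
      = ∑ n ∈ Finset.range (e + 1), (p : ℂ) ^ n *
          ((((μ (S n)).toReal - (μ (S (n + 1))).toReal : ℝ) : ℂ)
            - (∫ t in S n, χc t ∂μ - ∫ t in S (n + 1), χc t ∂μ)) := by
    rw [show (∫ t : ℤ_[p]ˣ, ((1 : ℂ) - χc t) / (‖(1 : ℤ_[p]) - (t : ℤ_[p])‖ : ℂ) ∂μ)
        = ∫ t : ℤ_[p]ˣ, ∑ n ∈ Finset.range (e + 1),
            (S n \ S (n + 1)).indicator (fun s => (p : ℂ) ^ n * (1 - χc s)) t ∂μ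
      from integral_congr_ae (Filter.Eventually.of_forall hgsum)]
    rw [integral_finset_sum _ (fun n _ => hAint n)]
    refine Finset.sum_congr rfl fun n _ => ?_
    rw [integral_indicator ((hSmeas n).diff (hSmeas (n + 1)))]
    rw [integral_const_mul]
    congr 1
    rw [integral_sub (integrable_const 1) hintχ.integrableOn]
    congr 1
    · rw [setIntegral_const, Measure.real]
      rw [measure_diff (hmono (Nat.le_succ n)) (hSmeas (n + 1)).nullMeasurableSet
        (measure_ne_top μ _)]
      rw [ENNReal.toReal_sub_of_le (measure_mono (hmono (Nat.le_succ n))) (measure_ne_top μ _)]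
      simp [Complex.real_smul]
    · exact integral_diff (hSmeas (n + 1)) hintχ.integrableOn (hmono (Nat.le_succ n))
  rw [step]
  rw [Finset.sum_range_succ]
  have hlast : (p : ℂ) ^ e *
      ((((μ (S e)).toReal - (μ (S (e + 1))).toReal : ℝ) : ℂ)
        - (∫ t in S e, χc t ∂μ - ∫ t in S (e + 1), χc t ∂μ))
      = (p : ℂ) ^ e * (((μ (S e)).toReal : ℝ) : ℂ) := by
    rw [hv0 e (by omega), hvf]
    push_cast
    ring
  have hothers : ∀ n ∈ Finset.range e, (p : ℂ) ^ n *
      ((((μ (S n)).toReal - (μ (S (n + 1))).toReal : ℝ) : ℂ)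
        - (∫ t in S n, χc t ∂μ - ∫ t in S (n + 1), χc t ∂μ))
      = (p : ℂ) ^ n * ((((μ (S n)).toReal - (μ (S (n + 1))).toReal : ℝ) : ℂ)) := by
    intro n hn
    rw [Finset.mem_range] at hn
    rw [hv0 n (by omega), hv0 (n + 1) (by omega)]
    ring
  rw [Finset.sum_congr rfl hothers, hlast]
  have htel := telescope_sum p L (fun n => (μ (S n)).toReal) hc0 hcs e
  have htelC := congrArg (fun x : ℝ => (x : ℂ)) htel
  push_cast at htelC ⊢
  linear_combination htelC
end

section
/- Define h₊ : ℝ → ℝ by h₊(τ) = −log π + Re ψ(1/4 + iτ/2), and α : ℝ → ℝ by α(τ) = 8√2 · cos(τ·log 2)/(1 + 4τ²) + h₊(τ). Then α is continuous, α(τ) → +∞ as τ → +∞ and as τ → −∞, and consequently there exists ε₀ > 0 such that for every ε with 0 < ε ≤ ε₀ there exists A > 0 with A·cos(ετ) + α(τ) ≥ 0 for all τ ∈ ℝ. -/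
open Filter Real

/-- `h₊(τ) = −log π + Re ψ(1/4 + iτ/2)`, where `ψ = Γ'/Γ` is the digamma function. -/
noncomputable def hPlus (τ : ℝ) : ℝ :=
  -Real.log Real.pi + (logDeriv Complex.Gamma (1 / 4 + Complex.I * τ / 2)).re

/-- `α(τ) = 8√2 cos(τ log 2)/(1 + 4τ²) + h₊(τ)`. -/
noncomputable def alphaFn (τ : ℝ) : ℝ :=
  8 * Real.sqrt 2 * Real.cos (τ * Real.log 2) / (1 + 4 * τ ^ 2) + hPlus τ

open MeasureTheory Set Topology


noncomputable def gind (n : ℕ) : ℝ → ℝ := Set.indicator (Set.Ioc 0 (n:ℝ)) (fun x => (1 - x/n)^n)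

lemma gind_nonneg {n : ℕ} (x : ℝ) : 0 ≤ gind n x := by
  unfold gind
  by_cases hx : x ∈ Set.Ioc (0:ℝ) n
  · rw [Set.indicator_of_mem hx]
    have : x / n ≤ 1 := by
      rcases hx with ⟨h1, h2⟩
      have hn : (0:ℝ) < n := lt_of_lt_of_le h1 h2
      rw [div_le_one hn]; exact h2
    exact pow_nonneg (by linarith) n
  · rw [Set.indicator_of_notMem hx]

lemma gind_le_exp {n : ℕ} (x : ℝ) (hx : 0 < x) : gind n x ≤ Real.exp (-x) := by
  unfold gind
  by_cases hxm : x ∈ Set.Ioc (0:ℝ) n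
  · rw [Set.indicator_of_mem hxm]
    rcases hxm with ⟨h1, h2⟩
    have hn : (0:ℝ) < n := lt_of_lt_of_le h1 h2
    have h1n : 0 ≤ 1 - x / n := by
      rw [sub_nonneg, div_le_one hn]; exact h2
    calc (1 - x/n)^n ≤ (Real.exp (-(x/n)))^n := by
          apply pow_le_pow_left₀ h1n
          linarith [Real.add_one_le_exp (-(x/n))]
        _ = Real.exp (-x) := by
          rw [← Real.exp_nat_mul]
          congr 1
          field_simp
  · rw [Set.indicator_of_notMem hxm]; positivity

lemma integral_indicator_Ioc {E : Type*} [NormedAddCommGroup E] [NormedSpace ℝ E]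
    (n : ℝ) (h : ℝ → E) :
    ∫ x in Set.Ioi (0:ℝ), Set.indicator (Set.Ioc 0 n) h x =
      ∫ x in Set.Ioc (0:ℝ) n, h x := by
  rw [MeasureTheory.integral_indicator measurableSet_Ioc,
    Measure.restrict_restrict_of_subset Set.Ioc_subset_Ioi_self]

lemma gind_meas (n : ℕ) : Measurable (gind n) :=
  (Measurable.indicator (by fun_prop) measurableSet_Ioc)

lemma gind_int {c : ℝ} (hc : 0 < c) (n : ℕ) :
    IntegrableOn (fun x => gind n x * x ^ (c-1)) (Set.Ioi (0:ℝ)) := by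
  apply Integrable.mono' (Real.GammaIntegral_convergent hc)
  · exact ((gind_meas n).mul (by fun_prop)).aestronglyMeasurable
  · filter_upwards [ae_restrict_mem measurableSet_Ioi] with x hx
    have hx0 : (0:ℝ) < x := hx
    rw [Real.norm_eq_abs, abs_of_nonneg (mul_nonneg (gind_nonneg x) (Real.rpow_nonneg hx0.le _))]
    exact mul_le_mul_of_nonneg_right (gind_le_exp x hx0) (Real.rpow_nonneg hx0.le _)

noncomputable def Efun (n : ℕ) (c : ℝ) : ℝ :=
  ∫ x in Set.Ioi (0:ℝ), (Real.exp (-x) - gind n x) * x ^ (c-1)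

lemma Efun_int {c : ℝ} (hc : 0 < c) (n : ℕ) :
    IntegrableOn (fun x => (Real.exp (-x) - gind n x) * x ^ (c-1)) (Set.Ioi (0:ℝ)) := by
  have := (Real.GammaIntegral_convergent hc).sub (gind_int hc n)
  simpa [sub_mul, Pi.sub_def] using this

lemma Rr_eq (n : ℕ) (c : ℝ) :
    ∫ x in Set.Ioi (0:ℝ), gind n x * x ^ (c-1) =
      ∫ x in Set.Ioc (0:ℝ) n, (1 - x/n)^n * x ^ (c-1) := by
  rw [← integral_indicator_Ioc (n:ℝ) (fun x => (1 - x/n)^n * x ^ (c-1))]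
  apply setIntegral_congr_fun measurableSet_Ioi
  intro x _
  unfold gind
  by_cases hx : x ∈ Set.Ioc (0:ℝ) (n:ℝ) <;>
    simp [Set.indicator_of_mem, Set.indicator_of_notMem, hx]

lemma GammaSeq_real_eq {c : ℝ} (hc : 0 < c) {n : ℕ} (hn : n ≠ 0) :
    Complex.GammaSeq (c:ℂ) n = ((∫ x in Set.Ioc (0:ℝ) n, (1 - x/n)^n * x ^ (c-1) : ℝ) : ℂ) := by
  rw [Complex.GammaSeq_eq_approx_Gamma_integral (by simpa using hc) hn,
    intervalIntegral.integral_of_le (by positivity : (0:ℝ) ≤ n)]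
  calc ∫ x in Set.Ioc (0:ℝ) n, (((1 - x/n)^n : ℝ) : ℂ) * (x:ℂ) ^ ((c:ℂ) - 1)
      = ∫ x in Set.Ioc (0:ℝ) n, ((((1 - x/n)^n * x ^ (c-1) : ℝ)) : ℂ) := by
        apply setIntegral_congr_fun measurableSet_Ioc
        intro x hx
        push_cast [Complex.ofReal_cpow hx.1.le]
        ring
    _ = ((∫ x in Set.Ioc (0:ℝ) n, (1 - x/n)^n * x ^ (c-1) : ℝ) : ℂ) := integral_ofReal

lemma Efun_tendsto {c : ℝ} (hc : 0 < c) :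
    Tendsto (fun n => Efun n c) atTop (𝓝 0) := by
  have h1 : Tendsto (fun n => (Complex.GammaSeq (c:ℂ) n).re) atTop (𝓝 (Real.Gamma c)) := by
    have := (Complex.continuous_re.tendsto _).comp (Complex.GammaSeq_tendsto_Gamma (c:ℂ))
    simpa [Real.Gamma, Function.comp_def] using this
  have h2 : ∀ᶠ n : ℕ in atTop, Efun n c = Real.Gamma c - (Complex.GammaSeq (c:ℂ) n).re := by
    filter_upwards [eventually_ge_atTop 1] with n hn
    rw [GammaSeq_real_eq hc (by omega), Complex.ofReal_re, ← Rr_eq]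
    unfold Efun
    rw [Real.Gamma_eq_integral hc, ← integral_sub (Real.GammaIntegral_convergent hc) (gind_int hc n)]
    apply setIntegral_congr_fun measurableSet_Ioi
    intro x _
    ring
  have := (tendsto_const_nhds (x := Real.Gamma c)).sub h1
  rw [sub_self] at this
  exact this.congr' (h2.mono fun n hn => hn.symm)

lemma norm_bound {s : ℂ} (h1 : 1/8 ≤ s.re) (h2 : s.re ≤ 1/2) {n : ℕ} (hn : 1 ≤ n) :
    ‖Complex.Gamma s - Complex.GammaSeq s n‖ ≤ Efun n (1/8) + Efun n (1/2) := by
  have hs : 0 < s.re := lt_of_lt_of_le (by norm_num) h1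
  set F : ℝ → ℂ := fun x => ((Real.exp (-x) : ℝ) : ℂ) * (x:ℂ) ^ (s - 1) with hF
  set G : ℝ → ℂ := fun x => ((gind n x : ℝ) : ℂ) * (x:ℂ) ^ (s - 1) with hG
  have hFint : IntegrableOn F (Set.Ioi (0:ℝ)) := Complex.GammaIntegral_convergent hs
  have hGmeas : AEStronglyMeasurable G (volume.restrict (Set.Ioi (0:ℝ))) := by
    apply Measurable.aestronglyMeasurable
    exact (Complex.measurable_ofReal.comp (gind_meas n)).mul (by fun_prop)
  have hnorm : ∀ x : ℝ, x ∈ Set.Ioi (0:ℝ) → ‖F x - G x‖ =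
      (Real.exp (-x) - gind n x) * x ^ (s.re - 1) := by
    intro x hx
    have hx0 : (0:ℝ) < x := hx
    have heg : 0 ≤ Real.exp (-x) - gind n x := by linarith [gind_le_exp (n := n) x hx0]
    have : F x - G x = (((Real.exp (-x) - gind n x : ℝ)) : ℂ) * (x:ℂ) ^ (s - 1) := by
      simp only [hF, hG, Complex.ofReal_sub, sub_mul]
    rw [this, norm_mul, Complex.norm_real,
      Complex.norm_cpow_eq_rpow_re_of_pos hx0, Complex.sub_re, Complex.one_re,
      Real.norm_eq_abs, abs_of_nonneg heg]
  have hGint : IntegrableOn G (Set.Ioi (0:ℝ)) := by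
    apply Integrable.mono' hFint.norm hGmeas
    filter_upwards [ae_restrict_mem measurableSet_Ioi] with x hx
    have hx0 : (0:ℝ) < x := hx
    rw [hG, hF]
    simp only [norm_mul, Complex.norm_real, Real.norm_eq_abs]
    apply mul_le_mul_of_nonneg_right _ (norm_nonneg _)
    rw [abs_of_nonneg (gind_nonneg x), abs_of_nonneg (Real.exp_nonneg _)]
    exact gind_le_exp x hx0
  have hGS : Complex.GammaSeq s n = ∫ x in Set.Ioi (0:ℝ), G x := by
    rw [Complex.GammaSeq_eq_approx_Gamma_integral hs (by omega),
      intervalIntegral.integral_of_le (by positivity : (0:ℝ) ≤ (n:ℝ)),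
      ← integral_indicator_Ioc (n:ℝ) (fun x => (((1 - x/n)^n : ℝ):ℂ) * (x:ℂ) ^ (s-1))]
    apply setIntegral_congr_fun measurableSet_Ioi
    intro x _
    rw [hG]
    unfold gind
    by_cases hx : x ∈ Set.Ioc (0:ℝ) (n:ℝ) <;>
      simp [Set.indicator_of_mem, Set.indicator_of_notMem, hx]
  have hFG : IntegrableOn (fun x => F x - G x) (Set.Ioi (0:ℝ)) := hFint.sub hGint
  have key : Complex.Gamma s - Complex.GammaSeq s n = ∫ x in Set.Ioi (0:ℝ), (F x - G x) := by
    rw [Complex.Gamma_eq_integral hs, hGS,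
      show s.GammaIntegral = ∫ x in Set.Ioi (0:ℝ), F x from rfl, ← integral_sub hFint hGint]
  rw [key]
  calc ‖∫ x in Set.Ioi (0:ℝ), (F x - G x)‖
      ≤ ∫ x in Set.Ioi (0:ℝ), ‖F x - G x‖ := norm_integral_le_integral_norm _
    _ ≤ ∫ x in Set.Ioi (0:ℝ),
        ((Real.exp (-x) - gind n x) * x ^ ((1:ℝ)/8-1) +
         (Real.exp (-x) - gind n x) * x ^ ((1:ℝ)/2-1)) := by
        apply setIntegral_mono_on (hFG.norm) _ measurableSet_Ioi
        · intro x hx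
          have hx0 : (0:ℝ) < x := hx
          rw [hnorm x hx]
          have heg : 0 ≤ Real.exp (-x) - gind n x := by linarith [gind_le_exp (n := n) x hx0]
          rw [← mul_add]
          apply mul_le_mul_of_nonneg_left _ heg
          rcases le_or_gt x 1 with hx1 | hx1
          · have := Real.rpow_le_rpow_of_exponent_ge hx0 hx1 (by linarith : (1:ℝ)/8-1 ≤ s.re-1)
            have h0 : (0:ℝ) ≤ x ^ ((1:ℝ)/2-1) := Real.rpow_nonneg hx0.le _
            linarith
          · have := Real.rpow_le_rpow_of_exponent_le hx1.le (by linarith : s.re-1 ≤ (1:ℝ)/2-1)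
            have h0 : (0:ℝ) ≤ x ^ ((1:ℝ)/8-1) := Real.rpow_nonneg hx0.le _
            linarith
        · exact (Efun_int (by norm_num) n).add (Efun_int (by norm_num) n)
    _ = Efun n (1/8) + Efun n (1/2) := by
        rw [integral_add (Efun_int (by norm_num) n) (Efun_int (by norm_num) n)]
        rfl

lemma gamma_unif : TendstoUniformlyOn (fun (n : ℕ) (s : ℂ) => Complex.GammaSeq s n)
    Complex.Gamma atTop {s : ℂ | 1/8 < s.re ∧ s.re < 1/2} := by
  rw [Metric.tendstoUniformlyOn_iff]
  intro ε hε
  have h0 : Tendsto (fun n => Efun n (1/8) + Efun n (1/2)) atTop (𝓝 0) := by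
    simpa using (Efun_tendsto (by norm_num : (0:ℝ) < 1/8)).add
      (Efun_tendsto (by norm_num : (0:ℝ) < 1/2))
  filter_upwards [h0.eventually (gt_mem_nhds hε), eventually_ge_atTop 1] with n hn hn1 s hsV
  rw [dist_eq_norm]
  exact lt_of_le_of_lt (norm_bound hsV.1.le hsV.2.le hn1) hn

lemma add_nat_ne_zero {s : ℂ} (hs : 0 < s.re) (j : ℕ) : s + j ≠ 0 := by
  intro h
  have := congrArg Complex.re h
  simp only [Complex.add_re, Complex.natCast_re, Complex.zero_re] at this
  have hj : (0:ℝ) ≤ j := Nat.cast_nonneg j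
  linarith

lemma gammaSeq_differentiableAt {s : ℂ} (hs : 0 < s.re) {n : ℕ} (hn : 1 ≤ n) :
    DifferentiableAt ℂ (fun z => Complex.GammaSeq z n) s := by
  have hn0 : (n:ℂ) ≠ 0 := Nat.cast_ne_zero.mpr (by omega)
  apply DifferentiableAt.div
  · exact (differentiableAt_id.const_cpow (Or.inl hn0)).mul_const _
  · exact DifferentiableAt.fun_finsetProd fun j _ => differentiableAt_id.add_const _
  · rw [Finset.prod_ne_zero_iff]
    exact fun j _ => add_nat_ne_zero hs j

lemma logDeriv_gammaSeq {s : ℂ} (hs : 0 < s.re) {n : ℕ} (hn : 1 ≤ n) :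
    logDeriv (fun z => Complex.GammaSeq z n) s =
      Complex.log n - ∑ j ∈ Finset.range (n+1), (s + j)⁻¹ := by
  have hn0 : (n:ℂ) ≠ 0 := Nat.cast_ne_zero.mpr (by omega)
  have hcpow : (n:ℂ) ^ s ≠ 0 := by
    rw [Ne, Complex.cpow_eq_zero_iff]
    tauto
  have hfact : ((Nat.factorial n : ℕ) : ℂ) ≠ 0 := Nat.cast_ne_zero.mpr (Nat.factorial_ne_zero n)
  have hprod : (∏ j ∈ Finset.range (n+1), (s + (j:ℂ))) ≠ 0 := by
    rw [Finset.prod_ne_zero_iff]; exact fun j _ => add_nat_ne_zero hs j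
  unfold Complex.GammaSeq
  rw [logDeriv_div (f := fun z : ℂ => (n:ℂ) ^ z * ((Nat.factorial n : ℕ) : ℂ))
      (g := fun z : ℂ => ∏ j ∈ Finset.range (n+1), (z + (j:ℂ))) s
      (mul_ne_zero hcpow hfact) hprod
      ((differentiableAt_id.const_cpow (Or.inl hn0)).mul_const _)
      (DifferentiableAt.fun_finsetProd fun j _ => differentiableAt_id.add_const _),
    logDeriv_mul_const s _ hfact]
  congr 1
  · rw [logDeriv_apply,
      (Complex.hasStrictDerivAt_const_cpow (x := (n:ℂ)) (y := s) (Or.inl hn0)).hasDerivAt.deriv,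
      mul_comm, mul_div_assoc, div_self hcpow, mul_one]
  · rw [logDeriv_prod (s := Finset.range (n+1)) (f := fun (j : ℕ) (z : ℂ) => z + (j:ℂ)) (x := s)
      (fun j _ => add_nat_ne_zero hs j) (fun j _ => differentiableAt_id.add_const _)]
    apply Finset.sum_congr rfl
    intro j _
    rw [logDeriv_apply, deriv_add_const, deriv_id'', one_div]

lemma gamma_ne_zero_of_re {z : ℂ} (hz : 0 < z.re) : Complex.Gamma z ≠ 0 := by
  apply Complex.Gamma_ne_zero
  intro m h
  rw [h] at hz
  simp only [Complex.neg_re, Complex.natCast_re] at hz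
  have : (0:ℝ) ≤ m := Nat.cast_nonneg m
  linarith

lemma digamma_limit {z : ℂ} (hz : z.re = 1/4) :
    Tendsto (fun n : ℕ => Real.log n - ∑ j ∈ Finset.range (n+1), ((z + j)⁻¹).re) atTop
      (𝓝 ((logDeriv Complex.Gamma z).re)) := by
  set V : Set ℂ := {s : ℂ | 1/8 < s.re ∧ s.re < 1/2} with hV
  have hVopen : IsOpen V :=
    (isOpen_lt continuous_const Complex.continuous_re).inter
      (isOpen_lt Complex.continuous_re continuous_const)
  have hzV : z ∈ V := by
    simp only [hV, Set.mem_setOf_eq, hz]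
    norm_num
  have hdiff : ∀ᶠ n : ℕ in atTop, DifferentiableOn ℂ (fun s => Complex.GammaSeq s n) V := by
    filter_upwards [eventually_ge_atTop 1] with n hn
    intro s hsV
    exact (gammaSeq_differentiableAt (lt_trans (by norm_num) hsV.1) hn).differentiableWithinAt
  have h1 := Complex.logDeriv_tendsto (f := fun (n : ℕ) (s : ℂ) => Complex.GammaSeq s n)
    (g := Complex.Gamma) hVopen hzV (gamma_unif.tendstoLocallyUniformlyOn) hdiff
    (gamma_ne_zero_of_re (by rw [hz]; norm_num))
  have h2 : Tendsto (fun n : ℕ => Complex.log n - ∑ j ∈ Finset.range (n+1), (z + j)⁻¹)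
      atTop (𝓝 (logDeriv Complex.Gamma z)) := by
    apply h1.congr'
    filter_upwards [eventually_ge_atTop 1] with n hn
    exact logDeriv_gammaSeq (by rw [hz]; norm_num) hn
  have h3 := (Complex.continuous_re.tendsto _).comp h2
  apply h3.congr'
  filter_upwards [eventually_ge_atTop 1] with n hn
  simp only [Function.comp_apply, Complex.sub_re, Complex.re_sum]
  congr 1
  rw [Complex.log_re, Complex.norm_natCast]

lemma re_inv_formula {z : ℂ} (hz : z.re = 1/4) (j : ℕ) :
    ((z + j)⁻¹).re = ((j:ℝ) + 1/4) / (((j:ℝ) + 1/4)^2 + z.im^2) := by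
  rw [Complex.inv_re, Complex.normSq_apply]
  simp only [Complex.add_re, Complex.add_im, Complex.natCast_re, Complex.natCast_im, hz, add_zero]
  ring_nf

lemma quarter_re : ((1:ℂ)/4).re = 1/4 := by norm_num
lemma quarter_im : ((1:ℂ)/4).im = 0 := by norm_num

lemma rePsi_lower {z : ℂ} (hz : z.re = 1/4) (N : ℕ) (hN : (N:ℝ) + 1 ≤ |z.im|) :
    (logDeriv Complex.Gamma ((1:ℂ)/4)).re
      + (1/2) * ∑ j ∈ Finset.range (N+1), (1:ℝ)/((j:ℝ)+1)
      ≤ (logDeriv Complex.Gamma z).re := by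
  set t := z.im with htdef
  have ht2 : ((N:ℝ)+1)^2 ≤ t^2 := by
    have h0 : (0:ℝ) ≤ (N:ℝ) + 1 := by positivity
    nlinarith [sq_abs t, abs_nonneg t]
  set d : ℕ → ℝ := fun j => ((((1:ℂ)/4) + j)⁻¹).re - ((z + j)⁻¹).re with hd
  have hdformula : ∀ j : ℕ, d j =
      ((j:ℝ) + 1/4) / (((j:ℝ) + 1/4)^2) - ((j:ℝ) + 1/4) / (((j:ℝ) + 1/4)^2 + t^2) := by
    intro j
    rw [hd]
    simp only
    rw [re_inv_formula hz j, re_inv_formula quarter_re j, quarter_im]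
    norm_num
    rfl
  have hd_nonneg : ∀ j : ℕ, 0 ≤ d j := by
    intro j
    rw [hdformula j]
    have ha : (0:ℝ) < (j:ℝ) + 1/4 := by positivity
    have h1 : ((j:ℝ) + 1/4)^2 ≤ ((j:ℝ) + 1/4)^2 + t^2 := by nlinarith [sq_nonneg t]
    have := div_le_div_of_nonneg_left ha.le (by positivity : (0:ℝ) < ((j:ℝ)+1/4)^2) h1
    linarith [div_le_div_of_nonneg_left ha.le (by positivity : (0:ℝ) < ((j:ℝ)+1/4)^2) h1]
  have hd_lb : ∀ j : ℕ, j ≤ N → (1/2) * (1/((j:ℝ)+1)) ≤ d j := by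
    intro j hj
    have ha : (0:ℝ) < (j:ℝ) + 1/4 := by positivity
    have haN : (j:ℝ) + 1/4 ≤ (N:ℝ) + 1 := by
      have : (j:ℝ) ≤ (N:ℝ) := Nat.cast_le.mpr hj
      linarith
    have ha2 : ((j:ℝ) + 1/4)^2 ≤ t^2 := by nlinarith
    rw [hdformula j]
    have heq : ((j:ℝ) + 1/4) / (((j:ℝ) + 1/4)^2) - ((j:ℝ) + 1/4) / (((j:ℝ) + 1/4)^2 + t^2)
        = t^2 / (((j:ℝ)+1/4) * (((j:ℝ)+1/4)^2 + t^2)) := by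
      field_simp
      ring
    rw [heq, show (1:ℝ)/2 * (1/((j:ℝ)+1)) = 1 / (2*((j:ℝ)+1)) from by rw [div_mul_div_comm, one_mul],
      div_le_div_iff₀ (by positivity) (by positivity)]
    nlinarith [sq_nonneg t]
  have hA := digamma_limit hz
  have hB := digamma_limit (z := (1:ℂ)/4) quarter_re
  have hsum : Tendsto (fun n : ℕ => ∑ j ∈ Finset.range (n+1), d j) atTop
      (𝓝 ((logDeriv Complex.Gamma z).re - (logDeriv Complex.Gamma ((1:ℂ)/4)).re)) := by
    have := hA.sub hB
    apply this.congr
    intro n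
    simp only [hd, Finset.sum_sub_distrib]
    ring
  have hmono : ∀ᶠ n : ℕ in atTop, ∑ j ∈ Finset.range (N+1), d j ≤ ∑ j ∈ Finset.range (n+1), d j := by
    filter_upwards [eventually_ge_atTop N] with n hn
    exact Finset.sum_le_sum_of_subset_of_nonneg
      (Finset.range_subset_range.mpr (by omega)) (fun j _ _ => hd_nonneg j)
  have hlim : ∑ j ∈ Finset.range (N+1), d j ≤
      (logDeriv Complex.Gamma z).re - (logDeriv Complex.Gamma ((1:ℂ)/4)).re :=
    ge_of_tendsto hsum hmono
  have hlb : (1/2) * ∑ j ∈ Finset.range (N+1), (1:ℝ)/((j:ℝ)+1) ≤ ∑ j ∈ Finset.range (N+1), d j := by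
    rw [Finset.mul_sum]
    apply Finset.sum_le_sum
    intro j hj
    exact hd_lb j (by simpa [Nat.lt_succ_iff] using Finset.mem_range.mp hj)
  linarith

lemma zpt_re (τ : ℝ) : ((1:ℂ)/4 + Complex.I * τ / 2).re = 1/4 := by simp
lemma zpt_im (τ : ℝ) : ((1:ℂ)/4 + Complex.I * τ / 2).im = τ/2 := by simp


lemma hPlus_ge (N : ℕ) (τ : ℝ) (hτ : 2*((N:ℝ)+1) ≤ |τ|) :
    -Real.log Real.pi + (logDeriv Complex.Gamma ((1:ℂ)/4)).re
      + (1/2) * ∑ j ∈ Finset.range (N+1), (1:ℝ)/((j:ℝ)+1) ≤ hPlus τ := by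
  have h1 : (N:ℝ) + 1 ≤ |((1:ℂ)/4 + Complex.I * τ / 2).im| := by
    rw [zpt_im, abs_div]
    rw [show |(2:ℝ)| = 2 from abs_of_pos two_pos]
    linarith [hτ]
  have := rePsi_lower (zpt_re τ) N h1
  unfold hPlus
  linarith

lemma hPlus_large (M : ℝ) : ∃ T : ℝ, 0 < T ∧ ∀ τ : ℝ, T ≤ |τ| → M ≤ hPlus τ := by
  set c := -Real.log Real.pi + (logDeriv Complex.Gamma ((1:ℂ)/4)).re with hc
  obtain ⟨n, hn⟩ := (tendsto_atTop.mp Real.tendsto_sum_range_one_div_nat_succ_atTop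
    (2*(M - c))).exists
  have hsum : 2*(M - c) ≤ ∑ j ∈ Finset.range (n+1), (1:ℝ)/((j:ℝ)+1) := by
    refine le_trans hn (Finset.sum_le_sum_of_subset_of_nonneg
      (Finset.range_subset_range.mpr (Nat.le_succ n)) (fun j _ _ => by positivity))
  refine ⟨2*((n:ℝ)+1), by positivity, fun τ hτ => ?_⟩
  have := hPlus_ge n τ hτ
  rw [← hc] at this
  linarith

lemma logDeriv_gamma_continuousAt {z : ℂ} (hz : 0 < z.re) :
    ContinuousAt (logDeriv Complex.Gamma) z := by
  set U : Set ℂ := {s : ℂ | 0 < s.re} with hU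
  have hUopen : IsOpen U := isOpen_lt continuous_const Complex.continuous_re
  have hdiff : DifferentiableOn ℂ Complex.Gamma U := by
    intro s hs
    exact (Complex.differentiableAt_Gamma s (fun m => by
      intro h
      rw [h] at hs
      simp only [hU, Set.mem_setOf_eq, Complex.neg_re, Complex.natCast_re] at hs
      have : (0:ℝ) ≤ m := Nat.cast_nonneg m
      linarith)).differentiableWithinAt
  have han : AnalyticOnNhd ℂ Complex.Gamma U := hdiff.analyticOnNhd hUopen
  have hder : ContinuousOn (deriv Complex.Gamma) U := (han.deriv).continuousOn
  have hcont : ContinuousOn (logDeriv Complex.Gamma) U := by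
    apply ContinuousOn.div hder han.continuousOn
    intro s hs
    exact gamma_ne_zero_of_re hs
  exact hcont.continuousAt (hUopen.mem_nhds hz)

lemma hPlus_continuous : Continuous hPlus := by
  apply continuous_const.add
  rw [continuous_iff_continuousAt]
  intro τ
  apply Complex.continuous_re.continuousAt.comp
  apply ContinuousAt.comp
  · exact logDeriv_gamma_continuousAt (by rw [show (1:ℂ)/4 + Complex.I * τ / 2 =
      (1/4 : ℂ) + Complex.I * τ / 2 from rfl, zpt_re]; norm_num)
  · fun_prop


lemma costerm_bound (τ : ℝ) :
    |8 * Real.sqrt 2 * Real.cos (τ * Real.log 2) / (1 + 4 * τ ^ 2)| ≤ 16 := by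
  have hden : (1:ℝ) ≤ 1 + 4 * τ^2 := by nlinarith [sq_nonneg τ]
  have hsqrt : Real.sqrt 2 ≤ 2 := by
    nlinarith [Real.sq_sqrt (by norm_num : (0:ℝ) ≤ 2), Real.sqrt_nonneg 2]
  have hcos : |Real.cos (τ * Real.log 2)| ≤ 1 := Real.abs_cos_le_one _
  rw [abs_div, abs_of_pos (by linarith : (0:ℝ) < 1 + 4*τ^2)]
  have hnum : |8 * Real.sqrt 2 * Real.cos (τ * Real.log 2)| ≤ 16 := by
    rw [abs_mul, abs_of_nonneg (by positivity : (0:ℝ) ≤ 8 * Real.sqrt 2)]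
    nlinarith [Real.sqrt_nonneg 2, abs_nonneg (Real.cos (τ * Real.log 2))]
  calc |8 * Real.sqrt 2 * Real.cos (τ * Real.log 2)| / (1 + 4*τ^2)
      ≤ |8 * Real.sqrt 2 * Real.cos (τ * Real.log 2)| / 1 := by
        apply div_le_div_of_nonneg_left (abs_nonneg _) one_pos hden
    _ ≤ 16 := by simpa using hnum

lemma alphaFn_continuous : Continuous alphaFn := by
  apply Continuous.add _ hPlus_continuous
  apply Continuous.div
  · fun_prop
  · fun_prop
  · intro τ
    nlinarith [sq_nonneg τ]

lemma alphaFn_large (M : ℝ) : ∃ T : ℝ, 0 < T ∧ ∀ τ : ℝ, T ≤ |τ| → M ≤ alphaFn τ := by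
  obtain ⟨T, hT, h⟩ := hPlus_large (M + 16)
  refine ⟨T, hT, fun τ hτ => ?_⟩
  have h1 := h τ hτ
  have h2 := costerm_bound τ
  have := abs_le.mp h2
  unfold alphaFn
  linarith [this.1]

lemma alphaFn_atTop : Tendsto alphaFn atTop atTop := by
  rw [tendsto_atTop]
  intro M
  obtain ⟨T, hT, h⟩ := alphaFn_large M
  filter_upwards [eventually_ge_atTop T] with τ hτ
  exact h τ (by rw [abs_of_pos (lt_of_lt_of_le hT hτ)]; exact hτ)

lemma alphaFn_atBot : Tendsto alphaFn atBot atTop := by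
  rw [tendsto_atTop]
  intro M
  obtain ⟨T, hT, h⟩ := alphaFn_large M
  rw [eventually_atBot]
  refine ⟨-T, fun τ hτ => ?_⟩
  apply h τ
  rw [abs_of_neg (by linarith : τ < 0)]
  linarith

lemma final_part (f : ℝ → ℝ) (hc : Continuous f)
    (hlarge : ∀ M : ℝ, ∃ T : ℝ, 0 < T ∧ ∀ τ : ℝ, T ≤ |τ| → M ≤ f τ) :
    ∃ ε₀ > (0 : ℝ), ∀ ε : ℝ, 0 < ε → ε ≤ ε₀ →
      ∃ A > (0 : ℝ), ∀ τ : ℝ, 0 ≤ A * Real.cos (ε * τ) + f τ := by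
  -- global lower bound
  obtain ⟨T₀, hT₀, h₀⟩ := hlarge 0
  obtain ⟨τ₀, hτ₀K, hmin⟩ := (isCompact_Icc (a := -T₀) (b := T₀)).exists_isMinOn
    (Set.nonempty_Icc.mpr (by linarith)) hc.continuousOn
  set M : ℝ := max 0 (-(f τ₀)) with hM
  have hMnonneg : 0 ≤ M := le_max_left _ _
  have hlb : ∀ τ : ℝ, -M ≤ f τ := by
    intro τ
    rcases le_or_gt T₀ |τ| with h | h
    · have := h₀ τ h
      have : (0:ℝ) ≤ f τ := this
      linarith
    · have hτK : τ ∈ Set.Icc (-T₀) T₀ := by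
        rw [Set.mem_Icc]
        constructor <;> [linarith [neg_abs_le τ]; linarith [le_abs_self τ]]
      have := hmin hτK
      have h2 : -(f τ₀) ≤ M := le_max_right _ _
      simp only [Set.mem_setOf_eq] at this
      linarith
  set A : ℝ := 2*M + 2 with hA
  have hApos : 0 < A := by positivity
  obtain ⟨T, hTpos, hT⟩ := hlarge A
  refine ⟨Real.pi / (3 * T), by positivity, fun ε hε hεle => ⟨A, hApos, fun τ => ?_⟩⟩
  rcases le_or_gt |τ| T with hcase | hcase
  · have hcos : 1/2 ≤ Real.cos (ε * τ) := by
      have habs : |ε * τ| ≤ Real.pi / 3 := by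
        rw [abs_mul, abs_of_pos hε]
        calc ε * |τ| ≤ (Real.pi / (3 * T)) * T :=
              mul_le_mul hεle hcase (abs_nonneg τ) (by positivity)
          _ = Real.pi / 3 := by field_simp
      have := Real.cos_le_cos_of_nonneg_of_le_pi (abs_nonneg (ε * τ))
        (by linarith [Real.pi_pos] : Real.pi / 3 ≤ Real.pi) habs
      rw [Real.cos_abs, Real.cos_pi_div_three] at this
      linarith
    have := hlb τ
    nlinarith
  · have h1 : A ≤ f τ := hT τ hcase.le
    have h2 : -1 ≤ Real.cos (ε * τ) := Real.neg_one_le_cos _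
    nlinarith


/-- The function `α` is continuous, tends to `+∞` at `±∞`, and
consequently there is an `ε₀ > 0` such that for every `0 < ε ≤ ε₀` there is an `A > 0`
with `A cos(ετ) + α(τ) ≥ 0` for all `τ ∈ ℝ`. -/
theorem alphaFn_continuous_tendsto_and_cosine_bound :
    Continuous alphaFn ∧
    Tendsto alphaFn atTop atTop ∧
    Tendsto alphaFn atBot atTop ∧
    ∃ ε₀ > (0 : ℝ), ∀ ε : ℝ, 0 < ε → ε ≤ ε₀ →
      ∃ A > (0 : ℝ), ∀ τ : ℝ, 0 ≤ A * Real.cos (ε * τ) + alphaFn τ := by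
  exact ⟨alphaFn_continuous, alphaFn_atTop, alphaFn_atBot,
    final_part alphaFn alphaFn_continuous alphaFn_large⟩
end
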